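/- For every λ > 0, n ∈ ℕ₀ and x ∈ [−1,1], 𝓘^λ_+ C_n^{λ+1/2}(x) = (√π Γ(λ)/Γ(λ+1/2)) · ((n+2λ)/(n+λ+1/2)) · C_n^λ(x), and 𝓘^λ_− C_n^{λ+1/2}(x) = (√π Γ(λ)/Γ(λ+1/2)) · ((n+1)/(n+λ+1/2)) · C_{n+1}^λ(x). -/

import Mathlib

open Real MeasureTheory Finset intervalIntegral

noncomputable section

/-- The Gegenbauer (ultraspherical) polynomial `C_n^λ`. -/
def Gegenbauer (lam : ℝ) (n : ℕ) (x : ℝ) : ℝ :=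
  ∑ k ∈ Finset.range (n / 2 + 1),
    ((-1 : ℝ) ^ k * Real.Gamma ((n : ℝ) - (k : ℝ) + lam) /
      (Real.Gamma lam * (Nat.factorial k : ℝ) * (Nat.factorial (n - 2 * k) : ℝ))) *
      (2 * x) ^ (n - 2 * k)

/-- The terminating hypergeometric polynomial `₂F₁(−m, b; c; z)`. -/
def hyp2F1 (m : ℕ) (b c z : ℝ) : ℝ :=
  ∑ k ∈ Finset.range (m + 1),
    ((ascPochhammer ℝ k).eval (-(m : ℝ)) * (ascPochhammer ℝ k).eval b) /
      ((ascPochhammer ℝ k).eval c * (Nat.factorial k : ℝ)) * z ^ k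

/-- The half-step fractional integral `I^λ_+`. -/
def Iplus (lam : ℝ) (f : ℝ → ℝ) (x : ℝ) : ℝ :=
  (1 + x) ^ (-lam + 1 / 2) *
    ∫ τ in (-1 : ℝ)..x, (x - τ) ^ (-(1 / 2) : ℝ) * (1 + τ) ^ lam * f τ

/-- The half-step fractional integral `I^λ_−`. -/
def Iminus (lam : ℝ) (f : ℝ → ℝ) (x : ℝ) : ℝ :=
  (1 - x) ^ (-lam + 1 / 2) *
    ∫ τ in x..(1 : ℝ), (τ - x) ^ (-(1 / 2) : ℝ) * (1 - τ) ^ lam * f τ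

/-- `𝓘^λ_+ = I^λ_+ + I^λ_−`. -/
def calIplus (lam : ℝ) (f : ℝ → ℝ) (x : ℝ) : ℝ := Iplus lam f x + Iminus lam f x

/-- `𝓘^λ_− = I^λ_+ − I^λ_−`. -/
def calIminus (lam : ℝ) (f : ℝ → ℝ) (x : ℝ) : ℝ := Iplus lam f x - Iminus lam f x

/-- The half-step fractional derivative `D^λ_+`. -/
def Dplus (lam : ℝ) (f : ℝ → ℝ) (x : ℝ) : ℝ :=
  (1 + x) *
    deriv (fun y : ℝ => (1 + y) ^ (-lam) *
      ∫ τ in (-1 : ℝ)..y, (y - τ) ^ (-(1 / 2) : ℝ) * (1 + τ) ^ (lam - 1 / 2) * f τ) x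

/-- The half-step fractional derivative `D^λ_−`. -/
def Dminus (lam : ℝ) (f : ℝ → ℝ) (x : ℝ) : ℝ :=
  (1 - x) *
    deriv (fun y : ℝ => (1 - y) ^ (-lam) *
      ∫ τ in y..(1 : ℝ), (τ - y) ^ (-(1 / 2) : ℝ) * (1 - τ) ^ (lam - 1 / 2) * f τ) x

/-- `𝓓^λ_+ = D^λ_+ + D^λ_−`. -/
def calDplus (lam : ℝ) (f : ℝ → ℝ) (x : ℝ) : ℝ := Dplus lam f x + Dminus lam f x

/-- `𝓓^λ_− = D^λ_+ − D^λ_−`. -/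
def calDminus (lam : ℝ) (f : ℝ → ℝ) (x : ℝ) : ℝ := Dplus lam f x - Dminus lam f x

/-- Normalization constant `h_n^λ` for the Gegenbauer system. -/
def hGeg (lam : ℝ) (n : ℕ) : ℝ :=
  Real.pi * Real.Gamma (2 * lam + n) /
    ((2 : ℝ) ^ (2 * lam - 1) * (Nat.factorial n : ℝ) * (lam + n) * (Real.Gamma lam) ^ 2)

/-- The `n`-th Gegenbauer coefficient (parameter `λ`) of `g`. -/
def gegCoeff (lam : ℝ) (g : ℝ → ℝ) (n : ℕ) : ℝ :=
  (1 / hGeg lam n) *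
    ∫ t in (-1 : ℝ)..1, g t * Gegenbauer lam n t * (1 - t ^ 2) ^ (lam - 1 / 2)

/-- The Chebyshev polynomial of the first kind, as a real function. -/
def chebT (n : ℕ) (x : ℝ) : ℝ := (Polynomial.Chebyshev.T ℝ (n : ℤ)).eval x

/-- The `n`-th Chebyshev coefficient of `f`. -/
def chebCoeff (f : ℝ → ℝ) (n : ℕ) : ℝ :=
  if n = 0 then
    (1 / Real.pi) * ∫ t in (-1 : ℝ)..1, f t * (1 - t ^ 2) ^ (-(1 / 2) : ℝ)
  else
    (2 / Real.pi) * ∫ t in (-1 : ℝ)..1, f t * chebT n t * (1 - t ^ 2) ^ (-(1 / 2) : ℝ)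

/-- The Legendre polynomial `P_n = C_n^{1/2}`. -/
def legendreP (n : ℕ) (x : ℝ) : ℝ := Gegenbauer (1 / 2) n x

/-- The `n`-th Legendre coefficient of `g`. -/
def legCoeff (g : ℝ → ℝ) (n : ℕ) : ℝ :=
  ((2 * (n : ℝ) + 1) / 2) * ∫ x in (-1 : ℝ)..1, g x * legendreP n x

/-- `f` is (zonal) positive definite on the sphere `S^m ⊂ ℝ^{m+1}`. -/
def PosDefSphere (m : ℕ) (f : ℝ → ℝ) : Prop :=
  ∀ (n : ℕ) (x : Fin n → EuclideanSpace ℝ (Fin (m + 1))),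
    (∀ i, ‖x i‖ = 1) → Function.Injective x →
      ∀ c : Fin n → ℝ,
        0 ≤ ∑ i : Fin n, ∑ j : Fin n, c i * c j * f (inner ℝ (x i) (x j) : ℝ)

/-- `f` is (zonal) strictly positive definite on the sphere `S^m ⊂ ℝ^{m+1}`. -/
def StrictPosDefSphere (m : ℕ) (f : ℝ → ℝ) : Prop :=
  ∀ (n : ℕ) (x : Fin n → EuclideanSpace ℝ (Fin (m + 1))),
    (∀ i, ‖x i‖ = 1) → Function.Injective x →
      ∀ c : Fin n → ℝ, c ≠ 0 →
        0 < ∑ i : Fin n, ∑ j : Fin n, c i * c j * f (inner ℝ (x i) (x j) : ℝ)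

/-- `f ∈ Λ_m`: continuous on `[−1,1]` and positive definite on `S^m`. -/
def MemLambda (m : ℕ) (f : ℝ → ℝ) : Prop :=
  ContinuousOn f (Set.Icc (-1 : ℝ) 1) ∧ PosDefSphere m f

/-- `f ∈ Λ^+_m`: continuous on `[−1,1]` and strictly positive definite on `S^m`. -/
def MemLambdaPlus (m : ℕ) (f : ℝ → ℝ) : Prop :=
  ContinuousOn f (Set.Icc (-1 : ℝ) 1) ∧ StrictPosDefSphere m f

end

set_option maxHeartbeats 1000000

noncomputable section AuxProof

/-- guarded term of the Gegenbauer sum -/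
def gterm (al : ℝ) (n k : ℕ) (x : ℝ) : ℝ :=
  if 2 * k ≤ n then
    ((-1 : ℝ) ^ k * Real.Gamma ((n : ℝ) - (k : ℝ) + al) /
      (Real.Gamma al * (Nat.factorial k : ℝ) * (Nat.factorial (n - 2 * k) : ℝ))) *
      (2 * x) ^ (n - 2 * k)
  else 0

lemma Gegenbauer_eq_sum (al : ℝ) (n : ℕ) (x : ℝ) :
    Gegenbauer al n x = ∑ k ∈ Finset.range (n + 1), gterm al n k x := by
  rw [Gegenbauer]
  rw [show (∑ k ∈ Finset.range (n / 2 + 1),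
      ((-1 : ℝ) ^ k * Real.Gamma ((n : ℝ) - (k : ℝ) + al) /
        (Real.Gamma al * (Nat.factorial k : ℝ) * (Nat.factorial (n - 2 * k) : ℝ))) *
        (2 * x) ^ (n - 2 * k)) = ∑ k ∈ Finset.range (n / 2 + 1), gterm al n k x from
    Finset.sum_congr rfl fun k hk => by
      rw [Finset.mem_range] at hk
      rw [gterm, if_pos (by omega)]]
  exact Finset.sum_subset (Finset.range_subset_range.mpr (by omega))
    (fun k hk hnk => by
      rw [Finset.mem_range] at hk
      simp only [Finset.mem_range, not_lt] at hnk
      rw [gterm, if_neg (by omega)])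

lemma gterm_rec (hal : 0 < al) (n k : ℕ) (x : ℝ) :
    ((n : ℝ) + 2) * gterm al (n + 2) k x
      = 2 * ((n : ℝ) + 1 + al) * x * gterm al (n + 1) k x
        - ((n : ℝ) + 2 * al) * (if k = 0 then 0 else gterm al n (k - 1) x) := by
  have hgal : Real.Gamma al ≠ 0 := (Real.Gamma_pos_of_pos hal).ne'
  rcases k with _ | j
  · rw [if_pos rfl, gterm, gterm, if_pos (by omega), if_pos (by omega)]
    have e1 : (n + 2 : ℕ) - 2 * 0 = (n + 1) + 1 := by omega
    have e2 : (n + 1 : ℕ) - 2 * 0 = n + 1 := by omega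
    rw [e1, e2]
    have g1 : ((n + 2 : ℕ) : ℝ) - ((0 : ℕ) : ℝ) + al = ((n : ℝ) + 1 + al) + 1 := by
      push_cast; ring
    have g2 : ((n + 1 : ℕ) : ℝ) - ((0 : ℕ) : ℝ) + al = (n : ℝ) + 1 + al := by
      push_cast; ring
    rw [g1, g2, Real.Gamma_add_one (by positivity)]
    have hf1 : ((Nat.factorial (n + 1 + 1) : ℕ) : ℝ)
        = ((n : ℝ) + 2) * ((Nat.factorial (n + 1) : ℕ) : ℝ) := by
      rw [Nat.factorial_succ]; push_cast; ring
    have hp : (2 * x) ^ (n + 1 + 1) = (2 * x) ^ (n + 1) * (2 * x) := pow_succ _ _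
    rw [hf1, hp]
    have hF : ((Nat.factorial (n + 1) : ℕ) : ℝ) ≠ 0 := Nat.cast_ne_zero.mpr (Nat.factorial_ne_zero _)
    field_simp
    ring
  · rw [if_neg (Nat.succ_ne_zero j), Nat.add_sub_cancel]
    by_cases h1 : 2 * (j + 1) ≤ n + 1
    · -- generic case : 2*(j+1) ≤ n+1, so 2j ≤ n-1
      rw [gterm, gterm, gterm, if_pos (by omega), if_pos h1, if_pos (by omega)]
      have e1 : (n + 2 : ℕ) - 2 * (j + 1) = (n - 2 * j - 1) + 1 := by omega
      have e2 : (n + 1 : ℕ) - 2 * (j + 1) = n - 2 * j - 1 := by omega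
      rw [e1, e2]
      have g1 : ((n + 2 : ℕ) : ℝ) - ((j + 1 : ℕ) : ℝ) + al = ((n : ℝ) - (j : ℝ) + al) + 1 := by
        push_cast; ring
      have g2 : ((n + 1 : ℕ) : ℝ) - ((j + 1 : ℕ) : ℝ) + al = (n : ℝ) - (j : ℝ) + al := by
        push_cast; ring
      have hnj : (0 : ℝ) < (n : ℝ) - (j : ℝ) + al := by
        have : (j : ℝ) ≤ (n : ℝ) := by exact_mod_cast Nat.cast_le.mpr (by omega)
        linarith
      rw [g1, g2, Real.Gamma_add_one hnj.ne']
      have hc1 : ((n - 2 * j - 1 : ℕ) : ℝ) = (n : ℝ) - 2 * (j : ℝ) - 1 := by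
        rw [Nat.cast_sub (by omega : 1 ≤ n - 2 * j), Nat.cast_sub (by omega : 2 * j ≤ n)]
        push_cast; ring
      have hf1 : ((Nat.factorial (n - 2 * j - 1 + 1) : ℕ) : ℝ)
          = ((n : ℝ) - 2 * (j : ℝ)) * ((Nat.factorial (n - 2 * j - 1) : ℕ) : ℝ) := by
        rw [Nat.factorial_succ]; push_cast [hc1]; ring
      have hf2 : ((Nat.factorial (j + 1) : ℕ) : ℝ) = ((j : ℝ) + 1) * ((Nat.factorial j : ℕ) : ℝ) := by
        rw [Nat.factorial_succ]; push_cast; ring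
      have hf3 : ((Nat.factorial (n - 2 * j) : ℕ) : ℝ)
          = ((n : ℝ) - 2 * (j : ℝ)) * ((Nat.factorial (n - 2 * j - 1) : ℕ) : ℝ) := by
        conv_lhs => rw [show (n - 2 * j) = (n - 2 * j - 1) + 1 from by omega]
        rw [Nat.factorial_succ]; push_cast [hc1]; ring
      have hp : (2 * x) ^ (n - 2 * j - 1 + 1) = (2 * x) ^ (n - 2 * j - 1) * (2 * x) := pow_succ _ _
      have hp3 : (2 * x) ^ (n - 2 * j) = (2 * x) ^ (n - 2 * j - 1) * (2 * x) := by
        conv_lhs => rw [show (n - 2 * j) = (n - 2 * j - 1) + 1 from by omega]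
        rw [pow_succ]
      have hs : ((-1 : ℝ)) ^ (j + 1) = -((-1 : ℝ) ^ j) := by rw [pow_succ]; ring
      rw [hf1, hf2, hf3, hp, hp3, hs]
      have hF : ((Nat.factorial (n - 2 * j - 1) : ℕ) : ℝ) ≠ 0 :=
        Nat.cast_ne_zero.mpr (Nat.factorial_ne_zero _)
      have hJ : ((Nat.factorial j : ℕ) : ℝ) ≠ 0 := Nat.cast_ne_zero.mpr (Nat.factorial_ne_zero _)
      have hnn : ((n : ℝ) - 2 * (j : ℝ)) ≠ 0 := by
        have : (2 * j + 1 : ℕ) ≤ n := by omega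
        have : (2 * (j : ℝ) + 1) ≤ (n : ℝ) := by exact_mod_cast this
        linarith
      field_simp
      ring
    · by_cases h2 : 2 * (j + 1) ≤ n + 2
      · -- boundary case : 2*(j+1) = n+2, n = 2*j
        have hn : n = 2 * j := by omega
        rw [gterm, gterm, gterm, if_pos h2, if_neg h1, if_pos (by omega)]
        have e1 : (n + 2 : ℕ) - 2 * (j + 1) = 0 := by omega
        have e3 : (n : ℕ) - 2 * j = 0 := by omega
        rw [e1, e3]
        have g1 : ((n + 2 : ℕ) : ℝ) - ((j + 1 : ℕ) : ℝ) + al = ((n : ℝ) - (j : ℝ) + al) + 1 := by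
          push_cast; ring
        have hnj : (0 : ℝ) < (n : ℝ) - (j : ℝ) + al := by
          have : (j : ℝ) ≤ (n : ℝ) := by exact_mod_cast Nat.cast_le.mpr (by omega)
          linarith
        rw [g1, Real.Gamma_add_one hnj.ne']
        have hf2 : ((Nat.factorial (j + 1) : ℕ) : ℝ) = ((j : ℝ) + 1) * ((Nat.factorial j : ℕ) : ℝ) := by
          rw [Nat.factorial_succ]; push_cast; ring
        have hs : ((-1 : ℝ)) ^ (j + 1) = -((-1 : ℝ) ^ j) := by rw [pow_succ]; ring
        rw [hf2, hs, Nat.factorial_zero]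
        have hJ : ((Nat.factorial j : ℕ) : ℝ) ≠ 0 := Nat.cast_ne_zero.mpr (Nat.factorial_ne_zero _)
        have hn' : (n : ℝ) = 2 * (j : ℝ) := by exact_mod_cast congrArg (Nat.cast (R := ℝ)) hn
        rw [hn']
        field_simp
        ring
      · -- degenerate : everything vanishes
        rw [gterm, gterm, gterm, if_neg (by omega), if_neg h1, if_neg (by omega)]
        ring

lemma Gegenbauer_rec {al : ℝ} (hal : 0 < al) (n : ℕ) (x : ℝ) :
    ((n : ℝ) + 2) * Gegenbauer al (n + 2) x
      = 2 * ((n : ℝ) + 1 + al) * x * Gegenbauer al (n + 1) x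
        - ((n : ℝ) + 2 * al) * Gegenbauer al n x := by
  rw [Gegenbauer_eq_sum al (n + 2), Gegenbauer_eq_sum al (n + 1), Gegenbauer_eq_sum al n]
  have h1 : ∑ k ∈ Finset.range (n + 1 + 1), gterm al (n + 1) k x
      = ∑ k ∈ Finset.range (n + 2 + 1), gterm al (n + 1) k x :=
    Finset.sum_subset (Finset.range_subset_range.mpr (by omega)) (fun k hk hnk => by
      rw [Finset.mem_range] at hk; simp only [Finset.mem_range, not_lt] at hnk
      rw [gterm, if_neg (by omega)])
  have h0 : ∑ k ∈ Finset.range (n + 2 + 1), (if k = 0 then 0 else gterm al n (k - 1) x)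
      = ∑ k ∈ Finset.range (n + 1), gterm al n k x := by
    rw [Finset.sum_range_succ']
    simp only [Nat.add_sub_cancel, Nat.succ_ne_zero, if_false, eq_self_iff_true, if_true, add_zero]
    refine (Finset.sum_subset (Finset.range_subset_range.mpr (Nat.le_succ _)) fun k hk hnk => ?_).symm
    rw [Finset.mem_range] at hk; simp only [Finset.mem_range, not_lt] at hnk
    rw [gterm, if_neg (by omega)]
  rw [h1, ← h0, Finset.mul_sum, Finset.mul_sum, Finset.mul_sum, ← Finset.sum_sub_distrib]
  exact Finset.sum_congr rfl fun k _ => gterm_rec hal n k x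

/-- coefficient of `(1+x)^j` in `C_m^al` -/
def Acoef (al : ℝ) (m j : ℕ) : ℝ :=
  if j ≤ m then
    (-1 : ℝ) ^ (m + j) * Real.Gamma ((m : ℝ) + (j : ℝ) + 2 * al) * Real.Gamma (al + 1 / 2) /
      (Real.Gamma (2 * al) * Real.Gamma (al + (j : ℝ) + 1 / 2) *
        ((m - j).factorial : ℝ) * (j.factorial : ℝ) * 2 ^ j)
  else 0

def Gt (al : ℝ) (m : ℕ) (x : ℝ) : ℝ :=
  ∑ j ∈ Finset.range (m + 1), Acoef al m j * (1 + x) ^ j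

lemma Acoef_rec {al : ℝ} (hal : 0 < al) (n k : ℕ) :
    ((n : ℝ) + 2) * Acoef al (n + 2) k
      = 2 * ((n : ℝ) + 1 + al) * ((if k = 0 then 0 else Acoef al (n + 1) (k - 1)) - Acoef al (n + 1) k)
        - ((n : ℝ) + 2 * al) * Acoef al n k := by
  have hG2 : Real.Gamma (2 * al) ≠ 0 := (Real.Gamma_pos_of_pos (by linarith)).ne'
  rcases k with _ | j
  · -- k = 0
    rw [if_pos rfl, Acoef, Acoef, Acoef, if_pos (by omega), if_pos (by omega), if_pos (by omega)]
    have c1 : ((n + 2 : ℕ) : ℝ) + ((0 : ℕ) : ℝ) + 2 * al = ((n : ℝ) + 2 * al) + 1 + 1 := by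
      push_cast; ring
    have c2 : ((n + 1 : ℕ) : ℝ) + ((0 : ℕ) : ℝ) + 2 * al = ((n : ℝ) + 2 * al) + 1 := by
      push_cast; ring
    have c3 : ((n : ℕ) : ℝ) + ((0 : ℕ) : ℝ) + 2 * al = (n : ℝ) + 2 * al := by
      push_cast; ring
    have hb : (0 : ℝ) < (n : ℝ) + 2 * al := by positivity
    rw [c1, c2, c3, Real.Gamma_add_one (by positivity), Real.Gamma_add_one hb.ne']
    simp only [Nat.sub_zero, Nat.factorial_zero, Nat.cast_one, pow_zero]
    have hf1 : ((Nat.factorial (n + 2) : ℕ) : ℝ)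
        = ((n : ℝ) + 2) * (((n : ℝ) + 1) * ((Nat.factorial n : ℕ) : ℝ)) := by
      rw [Nat.factorial_succ, Nat.factorial_succ]; push_cast; ring
    have hf2 : ((Nat.factorial (n + 1) : ℕ) : ℝ) = ((n : ℝ) + 1) * ((Nat.factorial n : ℕ) : ℝ) := by
      rw [Nat.factorial_succ]; push_cast; ring
    have s1 : (-1 : ℝ) ^ (n + 2 + 0) = (-1 : ℝ) ^ n := by
      rw [show n + 2 + 0 = n + 2 from by omega, pow_succ, pow_succ]; ring
    have s2 : (-1 : ℝ) ^ (n + 1 + 0) = -(-1 : ℝ) ^ n := by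
      rw [show n + 1 + 0 = n + 1 from by omega, pow_succ]; ring
    have s3 : (-1 : ℝ) ^ (n + 0) = (-1 : ℝ) ^ n := by rw [show n + 0 = n from by omega]
    rw [hf1, hf2, s1, s2, s3]
    have hFn : ((Nat.factorial n : ℕ) : ℝ) ≠ 0 := Nat.cast_ne_zero.mpr (Nat.factorial_ne_zero _)
    have hg1 : Real.Gamma (al + ((0 : ℕ) : ℝ) + 1 / 2) ≠ 0 :=
      (Real.Gamma_pos_of_pos (by push_cast; linarith)).ne'
    field_simp
    ring
  · by_cases h1 : j + 1 ≤ n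
    · -- generic case
      rw [if_neg (Nat.succ_ne_zero j), Nat.add_sub_cancel,
        Acoef, Acoef, Acoef, Acoef, if_pos (by omega), if_pos (by omega), if_pos (by omega),
        if_pos (by omega)]
      have c1 : ((n + 2 : ℕ) : ℝ) + ((j + 1 : ℕ) : ℝ) + 2 * al
          = ((n : ℝ) + (j : ℝ) + 1 + 2 * al) + 1 + 1 := by push_cast; ring
      have c2 : ((n + 1 : ℕ) : ℝ) + ((j : ℕ) : ℝ) + 2 * al
          = (n : ℝ) + (j : ℝ) + 1 + 2 * al := by push_cast; ring
      have c3 : ((n + 1 : ℕ) : ℝ) + ((j + 1 : ℕ) : ℝ) + 2 * al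
          = ((n : ℝ) + (j : ℝ) + 1 + 2 * al) + 1 := by push_cast; ring
      have c4 : ((n : ℕ) : ℝ) + ((j + 1 : ℕ) : ℝ) + 2 * al
          = (n : ℝ) + (j : ℝ) + 1 + 2 * al := by push_cast; ring
      have hb : (0 : ℝ) < (n : ℝ) + (j : ℝ) + 1 + 2 * al := by positivity
      have d1 : al + ((j + 1 : ℕ) : ℝ) + 1 / 2 = (al + (j : ℝ) + 1 / 2) + 1 := by push_cast; ring
      have hd : (0 : ℝ) < al + (j : ℝ) + 1 / 2 := by positivity
      rw [c1, c2, c3, c4, d1, Real.Gamma_add_one (by positivity), Real.Gamma_add_one hb.ne',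
        Real.Gamma_add_one hd.ne']
      have e1 : (n + 2 : ℕ) - (j + 1) = (n - j) + 1 := by omega
      have e2 : (n + 1 : ℕ) - j = (n - j) + 1 := by omega
      have e3 : (n + 1 : ℕ) - (j + 1) = n - j := by omega
      have e4 : (n : ℕ) - (j + 1) = n - j - 1 := by omega
      rw [e1, e2, e3, e4]
      have hcnj : ((n - j : ℕ) : ℝ) = (n : ℝ) - (j : ℝ) := by
        rw [Nat.cast_sub (by omega)]
      have hF1 : ((Nat.factorial (n - j + 1) : ℕ) : ℝ)
          = ((n : ℝ) - (j : ℝ) + 1) * ((Nat.factorial (n - j) : ℕ) : ℝ) := by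
        rw [Nat.factorial_succ]; push_cast [hcnj]; ring
      have hc2 : ((n - j - 1 : ℕ) : ℝ) = (n : ℝ) - (j : ℝ) - 1 := by
        rw [Nat.cast_sub (by omega : 1 ≤ n - j), hcnj]; push_cast; ring
      have hF2 : ((Nat.factorial (n - j) : ℕ) : ℝ)
          = ((n : ℝ) - (j : ℝ)) * ((Nat.factorial (n - j - 1) : ℕ) : ℝ) := by
        conv_lhs => rw [show n - j = (n - j - 1) + 1 from by omega]
        rw [Nat.factorial_succ]
        push_cast [hc2]
        ring
      have hJ1 : ((Nat.factorial (j + 1) : ℕ) : ℝ) = ((j : ℝ) + 1) * ((Nat.factorial j : ℕ) : ℝ) := by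
        rw [Nat.factorial_succ]; push_cast; ring
      have s1 : (-1 : ℝ) ^ (n + 2 + (j + 1)) = -(-1 : ℝ) ^ (n + j) := by
        rw [show n + 2 + (j + 1) = n + j + 1 + 1 + 1 from by omega, pow_succ, pow_succ, pow_succ]
        ring
      have s2 : (-1 : ℝ) ^ (n + 1 + j) = -(-1 : ℝ) ^ (n + j) := by
        rw [show n + 1 + j = n + j + 1 from by omega, pow_succ]; ring
      have s3 : (-1 : ℝ) ^ (n + 1 + (j + 1)) = (-1 : ℝ) ^ (n + j) := by
        rw [show n + 1 + (j + 1) = n + j + 1 + 1 from by omega, pow_succ, pow_succ]; ring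
      have s4 : (-1 : ℝ) ^ (n + (j + 1)) = -(-1 : ℝ) ^ (n + j) := by
        rw [show n + (j + 1) = n + j + 1 from by omega, pow_succ]; ring
      have p1 : (2 : ℝ) ^ (j + 1) = 2 ^ j * 2 := pow_succ 2 j
      rw [hF1, hF2, hJ1, s1, s2, s3, s4, p1]
      have hFb : ((Nat.factorial (n - j - 1) : ℕ) : ℝ) ≠ 0 :=
        Nat.cast_ne_zero.mpr (Nat.factorial_ne_zero _)
      have hJb : ((Nat.factorial j : ℕ) : ℝ) ≠ 0 := Nat.cast_ne_zero.mpr (Nat.factorial_ne_zero _)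
      have hnj0 : ((n : ℝ) - (j : ℝ)) ≠ 0 := by
        have : (j : ℝ) + 1 ≤ (n : ℝ) := by exact_mod_cast h1
        linarith
      have hnj1 : ((n : ℝ) - (j : ℝ) + 1) ≠ 0 := by
        have : (j : ℝ) + 1 ≤ (n : ℝ) := by exact_mod_cast h1
        linarith
      have hj1 : ((j : ℝ) + 1) ≠ 0 := by positivity
      have hg1 : Real.Gamma (al + (j : ℝ) + 1 / 2) ≠ 0 := (Real.Gamma_pos_of_pos hd).ne'
      field_simp
      ring
    · by_cases h2 : j = n
      · -- k = n + 1
        subst h2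
        rw [if_neg (Nat.succ_ne_zero j), Nat.add_sub_cancel,
          Acoef, Acoef, Acoef, Acoef, if_pos (by omega), if_pos (by omega), if_pos (by omega),
          if_neg (by omega)]
        have c1 : ((j + 2 : ℕ) : ℝ) + ((j + 1 : ℕ) : ℝ) + 2 * al
            = (2 * (j : ℝ) + 1 + 2 * al) + 1 + 1 := by push_cast; ring
        have c2 : ((j + 1 : ℕ) : ℝ) + ((j : ℕ) : ℝ) + 2 * al
            = 2 * (j : ℝ) + 1 + 2 * al := by push_cast; ring
        have c3 : ((j + 1 : ℕ) : ℝ) + ((j + 1 : ℕ) : ℝ) + 2 * al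
            = (2 * (j : ℝ) + 1 + 2 * al) + 1 := by push_cast; ring
        have hb : (0 : ℝ) < 2 * (j : ℝ) + 1 + 2 * al := by positivity
        have d1 : al + ((j + 1 : ℕ) : ℝ) + 1 / 2 = (al + (j : ℝ) + 1 / 2) + 1 := by push_cast; ring
        have hd : (0 : ℝ) < al + (j : ℝ) + 1 / 2 := by positivity
        rw [c1, c2, c3, d1, Real.Gamma_add_one (by positivity), Real.Gamma_add_one hb.ne',
          Real.Gamma_add_one hd.ne']
        have e1 : (j + 2 : ℕ) - (j + 1) = 1 := by omega
        have e2 : (j + 1 : ℕ) - j = 1 := by omega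
        have e3 : (j + 1 : ℕ) - (j + 1) = 0 := by omega
        rw [e1, e2, e3]
        have hJ1 : ((Nat.factorial (j + 1) : ℕ) : ℝ)
            = ((j : ℝ) + 1) * ((Nat.factorial j : ℕ) : ℝ) := by
          rw [Nat.factorial_succ]; push_cast; ring
        have s1 : (-1 : ℝ) ^ (j + 2 + (j + 1)) = -(-1 : ℝ) ^ (j + j) := by
          rw [show j + 2 + (j + 1) = j + j + 1 + 1 + 1 from by omega, pow_succ, pow_succ, pow_succ]
          ring
        have s2 : (-1 : ℝ) ^ (j + 1 + j) = -(-1 : ℝ) ^ (j + j) := by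
          rw [show j + 1 + j = j + j + 1 from by omega, pow_succ]; ring
        have s3 : (-1 : ℝ) ^ (j + 1 + (j + 1)) = (-1 : ℝ) ^ (j + j) := by
          rw [show j + 1 + (j + 1) = j + j + 1 + 1 from by omega, pow_succ, pow_succ]; ring
        have p1 : (2 : ℝ) ^ (j + 1) = 2 ^ j * 2 := pow_succ 2 j
        rw [hJ1, s1, s2, s3, p1, Nat.factorial_one, Nat.factorial_zero]
        have hJb : ((Nat.factorial j : ℕ) : ℝ) ≠ 0 := Nat.cast_ne_zero.mpr (Nat.factorial_ne_zero _)
        have hj1 : ((j : ℝ) + 1) ≠ 0 := by positivity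
        have hg1 : Real.Gamma (al + (j : ℝ) + 1 / 2) ≠ 0 := (Real.Gamma_pos_of_pos hd).ne'
        push_cast
        field_simp
        ring
      · by_cases h3 : j = n + 1
        · -- k = n + 2
          subst h3
          rw [if_neg (Nat.succ_ne_zero _), Nat.add_sub_cancel,
            Acoef, Acoef, Acoef, Acoef, if_pos (by omega), if_pos (by omega), if_neg (by omega),
            if_neg (by omega)]
          have c1 : ((n + 2 : ℕ) : ℝ) + ((n + 1 + 1 : ℕ) : ℝ) + 2 * al
              = (2 * (n : ℝ) + 2 + 2 * al) + 1 + 1 := by push_cast; ring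
          have c3 : ((n + 1 : ℕ) : ℝ) + ((n + 1 : ℕ) : ℝ) + 2 * al
              = 2 * (n : ℝ) + 2 + 2 * al := by push_cast; ring
          have hb : (0 : ℝ) < 2 * (n : ℝ) + 2 + 2 * al := by positivity
          have d1 : al + ((n + 1 + 1 : ℕ) : ℝ) + 1 / 2 = (al + ((n + 1 : ℕ) : ℝ) + 1 / 2) + 1 := by
            push_cast; ring
          have hd : (0 : ℝ) < al + ((n + 1 : ℕ) : ℝ) + 1 / 2 := by positivity
          rw [c1, c3, d1, Real.Gamma_add_one (by positivity), Real.Gamma_add_one hb.ne',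
            Real.Gamma_add_one hd.ne']
          have e1 : (n + 2 : ℕ) - (n + 1 + 1) = 0 := by omega
          have e3 : (n + 1 : ℕ) - (n + 1) = 0 := by omega
          rw [e1, e3]
          have hJ1 : ((Nat.factorial (n + 1 + 1) : ℕ) : ℝ)
              = ((n : ℝ) + 2) * ((Nat.factorial (n + 1) : ℕ) : ℝ) := by
            rw [Nat.factorial_succ]; push_cast; ring
          have s1 : (-1 : ℝ) ^ (n + 2 + (n + 1 + 1)) = (-1 : ℝ) ^ (n + 1 + (n + 1)) := by
            rw [show n + 2 + (n + 1 + 1) = n + 1 + (n + 1) + 1 + 1 from by omega, pow_succ,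
              pow_succ]
            ring
          have p1 : (2 : ℝ) ^ (n + 1 + 1) = 2 ^ (n + 1) * 2 := pow_succ 2 (n + 1)
          rw [hJ1, s1, p1, Nat.factorial_zero]
          have hJb : ((Nat.factorial (n + 1) : ℕ) : ℝ) ≠ 0 :=
            Nat.cast_ne_zero.mpr (Nat.factorial_ne_zero _)
          have hg1 : Real.Gamma (al + ((n + 1 : ℕ) : ℝ) + 1 / 2) ≠ 0 :=
            (Real.Gamma_pos_of_pos hd).ne'
          field_simp
          push_cast
          ring
        · -- degenerate
          rw [if_neg (Nat.succ_ne_zero _), Nat.add_sub_cancel,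
            Acoef, Acoef, Acoef, Acoef, if_neg (by omega), if_neg (by omega), if_neg (by omega),
            if_neg (by omega)]
          ring

lemma Gt_rec {al : ℝ} (hal : 0 < al) (n : ℕ) (x : ℝ) :
    ((n : ℝ) + 2) * Gt al (n + 2) x
      = 2 * ((n : ℝ) + 1 + al) * x * Gt al (n + 1) x - ((n : ℝ) + 2 * al) * Gt al n x := by
  have hx : x * Gt al (n + 1) x
      = ∑ k ∈ Finset.range (n + 2 + 1),
          ((if k = 0 then 0 else Acoef al (n + 1) (k - 1)) - Acoef al (n + 1) k) * (1 + x) ^ k := by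
    rw [Gt, Finset.mul_sum]
    have step : ∀ j, x * (Acoef al (n + 1) j * (1 + x) ^ j)
        = Acoef al (n + 1) j * (1 + x) ^ (j + 1) - Acoef al (n + 1) j * (1 + x) ^ j := by
      intro j; rw [pow_succ]; ring
    rw [Finset.sum_congr rfl fun j _ => step j, Finset.sum_sub_distrib]
    have e1 : ∑ k ∈ Finset.range (n + 2 + 1),
            (if k = 0 then 0 else Acoef al (n + 1) (k - 1)) * (1 + x) ^ k
        = ∑ j ∈ Finset.range (n + 2), Acoef al (n + 1) j * (1 + x) ^ (j + 1) := by
      rw [Finset.sum_range_succ']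
      simp only [Nat.add_sub_cancel, Nat.succ_ne_zero, if_false, eq_self_iff_true, if_true,
        zero_mul, add_zero]
    have e2 : ∑ j ∈ Finset.range (n + 2), Acoef al (n + 1) j * (1 + x) ^ j
        = ∑ k ∈ Finset.range (n + 2 + 1), Acoef al (n + 1) k * (1 + x) ^ k := by
      refine Finset.sum_subset (Finset.range_subset_range.mpr (Nat.le_succ _)) fun k hk hnk => ?_
      simp only [Finset.mem_range, not_lt] at hnk
      rw [Acoef, if_neg (by omega), zero_mul]
    rw [← e1, e2, ← Finset.sum_sub_distrib]
    exact Finset.sum_congr rfl fun k _ => by ring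
  have h0 : Gt al n x = ∑ k ∈ Finset.range (n + 2 + 1), Acoef al n k * (1 + x) ^ k := by
    rw [Gt]
    refine Finset.sum_subset (Finset.range_subset_range.mpr (by omega)) fun k hk hnk => ?_
    simp only [Finset.mem_range, not_lt] at hnk
    rw [Acoef, if_neg (by omega), zero_mul]
  rw [show 2 * ((n : ℝ) + 1 + al) * x * Gt al (n + 1) x
      = 2 * ((n : ℝ) + 1 + al) * (x * Gt al (n + 1) x) from by ring, hx, h0, Gt,
    Finset.mul_sum, Finset.mul_sum, Finset.mul_sum, ← Finset.sum_sub_distrib]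
  exact Finset.sum_congr rfl fun k _ => by
    have := Acoef_rec hal n k
    calc ((n : ℝ) + 2) * (Acoef al (n + 2) k * (1 + x) ^ k)
        = (((n : ℝ) + 2) * Acoef al (n + 2) k) * (1 + x) ^ k := by ring
      _ = (2 * ((n : ℝ) + 1 + al) * ((if k = 0 then 0 else Acoef al (n + 1) (k - 1))
            - Acoef al (n + 1) k) - ((n : ℝ) + 2 * al) * Acoef al n k) * (1 + x) ^ k := by rw [this]
      _ = _ := by ring

lemma Gegenbauer_eq_Gt {al : ℝ} (hal : 0 < al) (n : ℕ) (x : ℝ) :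
    Gegenbauer al n x = Gt al n x := by
  induction n using Nat.twoStepInduction with
  | zero =>
    rw [Gegenbauer, Gt]
    simp only [Nat.zero_div, zero_add, Finset.sum_range_one]
    rw [Acoef, if_pos le_rfl]
    simp only [Nat.cast_zero, Nat.sub_zero, Nat.factorial_zero, Nat.cast_one, pow_zero,
      Nat.zero_sub, mul_one, CharP.cast_eq_zero]
    rw [show (0 : ℝ) + 0 + 2 * al = 2 * al from by ring, show al + 0 + 1 / 2 = al + 1 / 2 from by
      ring]
    have h1 : Real.Gamma (2 * al) ≠ 0 := (Real.Gamma_pos_of_pos (by linarith)).ne'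
    have h2 : Real.Gamma (al + 1 / 2) ≠ 0 := (Real.Gamma_pos_of_pos (by linarith)).ne'
    have h3 : Real.Gamma al ≠ 0 := (Real.Gamma_pos_of_pos hal).ne'
    field_simp
    simp
  | one =>
    rw [Gegenbauer, Gt]
    rw [show (1 : ℕ) / 2 + 1 = 1 from rfl]
    rw [Finset.sum_range_one, Finset.sum_range_succ, Finset.sum_range_one]
    rw [Acoef, Acoef, if_pos (by omega), if_pos (by omega)]
    have c0 : ((1 : ℕ) : ℝ) - ((0 : ℕ) : ℝ) + al = al + 1 := by push_cast; ring
    have c1 : ((1 : ℕ) : ℝ) + ((0 : ℕ) : ℝ) + 2 * al = 2 * al + 1 := by push_cast; ring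
    have c2 : ((1 : ℕ) : ℝ) + ((1 : ℕ) : ℝ) + 2 * al = (2 * al + 1) + 1 := by push_cast; ring
    have c3 : al + ((1 : ℕ) : ℝ) + 1 / 2 = (al + 1 / 2) + 1 := by push_cast; ring
    have c4 : al + ((0 : ℕ) : ℝ) + 1 / 2 = al + 1 / 2 := by push_cast; ring
    rw [c0, c1, c2, c3, c4, Real.Gamma_add_one hal.ne',
      Real.Gamma_add_one (by positivity : (2 : ℝ) * al + 1 ≠ 0),
      Real.Gamma_add_one (by positivity : (2 : ℝ) * al ≠ 0),
      Real.Gamma_add_one (by positivity : al + 1 / 2 ≠ 0)]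
    have h1 : Real.Gamma (2 * al) ≠ 0 := (Real.Gamma_pos_of_pos (by linarith)).ne'
    have h2 : Real.Gamma (al + 1 / 2) ≠ 0 := (Real.Gamma_pos_of_pos (by linarith)).ne'
    have h3 : Real.Gamma al ≠ 0 := (Real.Gamma_pos_of_pos hal).ne'
    simp only [Nat.factorial_zero, Nat.factorial_one, Nat.cast_one, pow_zero, pow_one]
    norm_num
    field_simp
    ring
  | more n ih1 ih2 =>
    have h := Gegenbauer_rec hal n x
    rw [ih1, ih2] at h
    exact mul_left_cancel₀ (by positivity : ((n : ℝ) + 2) ≠ 0) (h.trans (Gt_rec hal n x).symm)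
lemma rbeta {u v : ℝ} (hu : 0 < u) (hv : 0 < v) :
    ∫ s in (0:ℝ)..1, s ^ (u - 1) * (1 - s) ^ (v - 1)
      = Real.Gamma u * Real.Gamma v / Real.Gamma (u + v) := by
  have h := Complex.Gamma_mul_Gamma_eq_betaIntegral (s := (u : ℂ)) (t := (v : ℂ))
    (by simpa using hu) (by simpa using hv)
  have hbeta : Complex.betaIntegral (u : ℂ) (v : ℂ)
      = ((∫ s in (0:ℝ)..1, s ^ (u - 1) * (1 - s) ^ (v - 1) : ℝ) : ℂ) := by
    rw [Complex.betaIntegral, ← intervalIntegral.integral_ofReal]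
    refine intervalIntegral.integral_congr fun s hs => ?_
    rw [Set.uIcc_of_le (by norm_num : (0:ℝ) ≤ 1)] at hs
    push_cast
    rw [Complex.ofReal_cpow hs.1 (u - 1), Complex.ofReal_cpow (by linarith [hs.2]) (v - 1)]
    push_cast
    ring
  rw [hbeta, Complex.Gamma_ofReal, Complex.Gamma_ofReal, ← Complex.ofReal_add,
    Complex.Gamma_ofReal, ← Complex.ofReal_mul, ← Complex.ofReal_mul] at h
  have h' := Complex.ofReal_injective h
  have hG : Real.Gamma (u + v) ≠ 0 := (Real.Gamma_pos_of_pos (by linarith)).ne'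
  field_simp
  linarith [h']

lemma beta_half {b : ℝ} (hb : 0 < b) :
    ∫ s in (0:ℝ)..1, s ^ b * (1 - s) ^ (-(1/2) : ℝ)
      = Real.Gamma (b + 1) * Real.Gamma (1/2) / Real.Gamma (b + 1 + 1/2) := by
  have := rbeta (u := b + 1) (v := 1/2) (by linarith) (by norm_num)
  rw [show b + 1 - 1 = b from by ring, show (1:ℝ)/2 - 1 = -(1/2) from by norm_num] at this
  exact this

lemma integral_kernel {b : ℝ} (hb : 0 < b) {x : ℝ} (hx : (-1 : ℝ) < x) :
    ∫ τ in (-1 : ℝ)..x, (x - τ) ^ (-(1/2) : ℝ) * (1 + τ) ^ b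
      = (1 + x) ^ (b + 1/2) * (Real.Gamma (b + 1) * Real.Gamma (1/2) / Real.Gamma (b + 1 + 1/2)) := by
  have hpos : (0 : ℝ) < 1 + x := by linarith
  have hsub := intervalIntegral.integral_comp_mul_add
    (a := (0:ℝ)) (b := 1) (fun τ => (x - τ) ^ (-(1/2) : ℝ) * (1 + τ) ^ b) hpos.ne' (-1)
  rw [show (1 + x) * 0 + -1 = -1 from by ring, show (1 + x) * 1 + -1 = x from by ring] at hsub
  have key : (∫ τ in (-1 : ℝ)..x, (x - τ) ^ (-(1/2) : ℝ) * (1 + τ) ^ b)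
      = (1 + x) * ∫ s in (0:ℝ)..1,
          (x - ((1 + x) * s + -1)) ^ (-(1/2) : ℝ) * (1 + ((1 + x) * s + -1)) ^ b := by
    rw [hsub, smul_eq_mul, ← mul_assoc, mul_inv_cancel₀ hpos.ne', one_mul]
  rw [key]
  have hcongr : ∫ s in (0:ℝ)..1,
        (x - ((1 + x) * s + -1)) ^ (-(1/2) : ℝ) * (1 + ((1 + x) * s + -1)) ^ b
      = ∫ s in (0:ℝ)..1,
          ((1 + x) ^ (-(1/2) : ℝ) * (1 + x) ^ b) * (s ^ b * (1 - s) ^ (-(1/2) : ℝ)) := by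
    refine intervalIntegral.integral_congr fun s hs => ?_
    rw [Set.uIcc_of_le (by norm_num : (0:ℝ) ≤ 1)] at hs
    have h1 : x - ((1 + x) * s + -1) = (1 + x) * (1 - s) := by ring
    have h2 : 1 + ((1 + x) * s + -1) = (1 + x) * s := by ring
    rw [h1, h2, Real.mul_rpow hpos.le (by linarith [hs.2]), Real.mul_rpow hpos.le hs.1]
    ring
  rw [hcongr, intervalIntegral.integral_const_mul, beta_half hb]
  rw [show (1 + x) * ((1 + x) ^ (-(1/2) : ℝ) * (1 + x) ^ b *
        (Real.Gamma (b + 1) * Real.Gamma (1/2) / Real.Gamma (b + 1 + 1/2)))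
      = ((1 + x) ^ (1:ℝ) * (1 + x) ^ (-(1/2) : ℝ) * (1 + x) ^ b) *
        (Real.Gamma (b + 1) * Real.Gamma (1/2) / Real.Gamma (b + 1 + 1/2)) from by
    rw [Real.rpow_one]; ring]
  rw [← Real.rpow_add hpos, ← Real.rpow_add hpos]
  norm_num
  left
  rw [show (1:ℝ)/2 + b = b + 1/2 from by ring]

lemma Iplus_Gt {lam al : ℝ} (hlam : 0 < lam) (n : ℕ) {x : ℝ} (hx : (-1 : ℝ) ≤ x) :
    Iplus lam (Gt al n) x
      = ∑ j ∈ Finset.range (n + 1), Acoef al n j *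
          (Real.Gamma (lam + (j : ℝ) + 1) * Real.Gamma (1/2) /
            Real.Gamma (lam + (j : ℝ) + 1 + 1/2)) * (1 + x) ^ (j + 1) := by
  rcases eq_or_lt_of_le hx with h | h
  · rw [Iplus, ← h]
    rw [intervalIntegral.integral_same]
    rw [show (1 : ℝ) + -1 = 0 from by ring]
    rw [mul_zero]
    refine (Finset.sum_eq_zero fun j _ => ?_).symm
    rw [zero_pow (Nat.succ_ne_zero j), mul_zero]
  · have hpos : (0 : ℝ) < 1 + x := by linarith
    rw [Iplus]
    have hcongr : ∫ τ in (-1 : ℝ)..x, (x - τ) ^ (-(1/2) : ℝ) * (1 + τ) ^ lam * Gt al n τ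
        = ∫ τ in (-1 : ℝ)..x, ∑ j ∈ Finset.range (n + 1),
            Acoef al n j * ((x - τ) ^ (-(1/2) : ℝ) * (1 + τ) ^ (lam + (j : ℝ))) := by
      refine intervalIntegral.integral_congr fun τ hτ => ?_
      rw [Set.uIcc_of_le (by linarith : (-1:ℝ) ≤ x)] at hτ
      have hτ0 : (0 : ℝ) ≤ 1 + τ := by linarith [hτ.1]
      rw [Gt, Finset.mul_sum]
      refine Finset.sum_congr rfl fun j _ => ?_
      have hr : (1 + τ) ^ (lam + (j : ℝ)) = (1 + τ) ^ lam * (1 + τ) ^ j := by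
        rw [Real.rpow_add' hτ0 (by positivity), Real.rpow_natCast]
      rw [hr]; ring
    rw [hcongr]
    have hker : IntervalIntegrable (fun τ => (x - τ) ^ (-(1/2) : ℝ)) volume (-1) x := by
      have h2 := (intervalIntegral.intervalIntegrable_rpow'
        (a := x + 1) (b := 0) (by norm_num : (-1:ℝ) < -(1/2))).comp_sub_left x
      have e1 : x - (x + 1) = -1 := by ring
      have e2 : x - 0 = x := by ring
      rw [e1, e2] at h2
      exact h2
    have hint : ∀ j ∈ Finset.range (n + 1), IntervalIntegrable
        (fun τ => Acoef al n j * ((x - τ) ^ (-(1/2) : ℝ) * (1 + τ) ^ (lam + (j : ℝ))))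
        volume (-1) x := by
      intro j _
      have hcont : Continuous (fun τ : ℝ => (1 + τ) ^ (lam + (j : ℝ))) := by
        rw [continuous_iff_continuousAt]
        intro t
        exact (Real.continuousAt_rpow_const _ _ (Or.inr (by positivity))).comp
          (continuousAt_const.add continuousAt_id)
      exact ((hker.mul_continuousOn hcont.continuousOn).const_mul _)
    rw [intervalIntegral.integral_finset_sum hint, Finset.mul_sum]
    refine Finset.sum_congr rfl fun j _ => ?_
    rw [intervalIntegral.integral_const_mul, integral_kernel (by positivity) h]
    have hr2 : (1 + x) ^ (-lam + 1/2) * (1 + x) ^ (lam + (j : ℝ) + 1/2) = (1 + x) ^ (j + 1) := by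
      rw [← Real.rpow_add hpos, show -lam + 1/2 + (lam + (j : ℝ) + 1/2) = ((j : ℝ) + 1) from by
        ring]
      rw [show ((j : ℝ) + 1) = ((j + 1 : ℕ) : ℝ) from by push_cast; ring, Real.rpow_natCast]
    calc (1 + x) ^ (-lam + 1/2) *
          (Acoef al n j * ((1 + x) ^ (lam + (j : ℝ) + 1/2) *
            (Real.Gamma (lam + (j : ℝ) + 1) * Real.Gamma (1/2) /
              Real.Gamma (lam + (j : ℝ) + 1 + 1/2))))
        = ((1 + x) ^ (-lam + 1/2) * (1 + x) ^ (lam + (j : ℝ) + 1/2)) *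
            (Acoef al n j * (Real.Gamma (lam + (j : ℝ) + 1) * Real.Gamma (1/2) /
              Real.Gamma (lam + (j : ℝ) + 1 + 1/2))) := by ring
      _ = _ := by rw [hr2]; ring

lemma coeff0 {lam : ℝ} (hlam : 0 < lam) (n : ℕ) :
    ((n : ℝ) + 2 * lam) * Acoef lam n 0 + ((n : ℝ) + 1) * Acoef lam (n + 1) 0 = 0 := by
  rw [Acoef, Acoef, if_pos (by omega), if_pos (by omega)]
  have c1 : ((n : ℕ) : ℝ) + ((0 : ℕ) : ℝ) + 2 * lam = (n : ℝ) + 2 * lam := by push_cast; ring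
  have c2 : ((n + 1 : ℕ) : ℝ) + ((0 : ℕ) : ℝ) + 2 * lam = ((n : ℝ) + 2 * lam) + 1 := by
    push_cast; ring
  have hb : (0 : ℝ) < (n : ℝ) + 2 * lam := by positivity
  rw [c1, c2, Real.Gamma_add_one hb.ne']
  simp only [Nat.sub_zero, Nat.factorial_zero, Nat.cast_one, pow_zero]
  have hf2 : ((Nat.factorial (n + 1) : ℕ) : ℝ) = ((n : ℝ) + 1) * ((Nat.factorial n : ℕ) : ℝ) := by
    rw [Nat.factorial_succ]; push_cast; ring
  have s1 : (-1 : ℝ) ^ (n + 0) = (-1 : ℝ) ^ n := by rw [show n + 0 = n from rfl]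
  have s2 : (-1 : ℝ) ^ (n + 1 + 0) = -(-1 : ℝ) ^ n := by
    rw [show n + 1 + 0 = n + 1 from rfl, pow_succ]; ring
  rw [hf2, s1, s2]
  have hFn : ((Nat.factorial n : ℕ) : ℝ) ≠ 0 := Nat.cast_ne_zero.mpr (Nat.factorial_ne_zero _)
  have hg1 : Real.Gamma (lam + ((0 : ℕ) : ℝ) + 1 / 2) ≠ 0 :=
    (Real.Gamma_pos_of_pos (by push_cast; linarith)).ne'
  have hG2 : Real.Gamma (2 * lam) ≠ 0 := (Real.Gamma_pos_of_pos (by linarith)).ne'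
  field_simp
  ring

lemma coeffD {lam : ℝ} (hlam : 0 < lam) (n j : ℕ) (hj : j ≤ n) :
    Acoef (lam + 1/2) n j *
        (Real.Gamma (lam + (j : ℝ) + 1) * Real.Gamma (1/2) /
          Real.Gamma (lam + (j : ℝ) + 1 + 1/2))
      = Real.sqrt Real.pi * Real.Gamma lam / Real.Gamma (lam + 1/2) / (2 * ((n : ℝ) + lam + 1/2)) *
          (((n : ℝ) + 2 * lam) * Acoef lam n (j + 1) + ((n : ℝ) + 1) * Acoef lam (n + 1) (j + 1)) := by
  have hG2 : Real.Gamma (2 * lam) ≠ 0 := (Real.Gamma_pos_of_pos (by linarith)).ne'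
  have hGh : Real.Gamma (lam + 1/2) ≠ 0 := (Real.Gamma_pos_of_pos (by linarith)).ne'
  have hGl : Real.Gamma lam ≠ 0 := (Real.Gamma_pos_of_pos hlam).ne'
  have hs0 : ((n : ℝ) + lam + 1/2) ≠ 0 := by positivity
  rw [Real.Gamma_one_half_eq]
  rcases eq_or_lt_of_le hj with hjn | hjn
  · -- j = n
    subst hjn
    rw [Acoef, Acoef, Acoef, if_pos le_rfl, if_neg (by omega), if_pos le_rfl]
    have c1 : ((j : ℕ) : ℝ) + ((j : ℕ) : ℝ) + 2 * (lam + 1/2)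
        = (2 * (j : ℝ) + 2 * lam) + 1 := by push_cast; ring
    have c2 : ((j + 1 : ℕ) : ℝ) + ((j + 1 : ℕ) : ℝ) + 2 * lam
        = ((2 * (j : ℝ) + 2 * lam) + 1) + 1 := by push_cast; ring
    have hb : (0 : ℝ) < 2 * (j : ℝ) + 2 * lam := by positivity
    have c3 : (2 : ℝ) * (lam + 1/2) = (2 * lam) + 1 := by ring
    have c4 : lam + 1/2 + 1/2 = lam + 1 := by ring
    have c5 : lam + 1/2 + ((j : ℕ) : ℝ) + 1/2 = lam + (j : ℝ) + 1 := by push_cast; ring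
    have c6 : lam + ((j + 1 : ℕ) : ℝ) + 1/2 = lam + (j : ℝ) + 1 + 1/2 := by push_cast; ring
    rw [c1, c2, c3, c4, c5, c6,
      Real.Gamma_add_one (show (2 * (j:ℝ) + 2 * lam + 1) ≠ 0 from by positivity),
      Real.Gamma_add_one hb.ne', Real.Gamma_add_one hlam.ne',
      Real.Gamma_add_one (by positivity : (2:ℝ) * lam ≠ 0)]
    have e1 : (j : ℕ) - j = 0 := by omega
    have e2 : (j + 1 : ℕ) - (j + 1) = 0 := by omega
    rw [e1, e2, Nat.factorial_zero]
    have hJ1 : ((Nat.factorial (j + 1) : ℕ) : ℝ)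
        = ((j : ℝ) + 1) * ((Nat.factorial j : ℕ) : ℝ) := by
      rw [Nat.factorial_succ]; push_cast; ring
    have s1 : (-1 : ℝ) ^ (j + j) = (-1 : ℝ) ^ (j + j) := rfl
    have s2 : (-1 : ℝ) ^ (j + 1 + (j + 1)) = (-1 : ℝ) ^ (j + j) := by
      rw [show j + 1 + (j + 1) = j + j + 1 + 1 from by omega, pow_succ, pow_succ]; ring
    have p1 : (2 : ℝ) ^ (j + 1) = 2 ^ j * 2 := pow_succ 2 j
    rw [hJ1, s2, p1]
    have hJb : ((Nat.factorial j : ℕ) : ℝ) ≠ 0 := Nat.cast_ne_zero.mpr (Nat.factorial_ne_zero _)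
    have hg1 : Real.Gamma (lam + (j : ℝ) + 1 + 1/2) ≠ 0 :=
      (Real.Gamma_pos_of_pos (by positivity)).ne'
    have hg2 : Real.Gamma (lam + (j : ℝ) + 1) ≠ 0 := (Real.Gamma_pos_of_pos (by positivity)).ne'
    field_simp
    ring
  · -- j < n
    have hj1 : j + 1 ≤ n := hjn
    rw [Acoef, Acoef, Acoef, if_pos (by omega), if_pos (by omega), if_pos (by omega)]
    have c1 : ((n : ℕ) : ℝ) + ((j : ℕ) : ℝ) + 2 * (lam + 1/2)
        = ((n : ℝ) + (j : ℝ) + 2 * lam) + 1 := by push_cast; ring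
    have c2 : ((n : ℕ) : ℝ) + ((j + 1 : ℕ) : ℝ) + 2 * lam
        = ((n : ℝ) + (j : ℝ) + 2 * lam) + 1 := by push_cast; ring
    have c2' : ((n + 1 : ℕ) : ℝ) + ((j + 1 : ℕ) : ℝ) + 2 * lam
        = (((n : ℝ) + (j : ℝ) + 2 * lam) + 1) + 1 := by push_cast; ring
    have hb : (0 : ℝ) < (n : ℝ) + (j : ℝ) + 2 * lam := by positivity
    have c3 : (2 : ℝ) * (lam + 1/2) = (2 * lam) + 1 := by ring
    have c4 : lam + 1/2 + 1/2 = lam + 1 := by ring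
    have c5 : lam + 1/2 + ((j : ℕ) : ℝ) + 1/2 = lam + (j : ℝ) + 1 := by push_cast; ring
    have c6 : lam + ((j + 1 : ℕ) : ℝ) + 1/2 = lam + (j : ℝ) + 1 + 1/2 := by push_cast; ring
    rw [c1, c2, c2', c3, c4, c5, c6,
      Real.Gamma_add_one (show ((n:ℝ) + (j:ℝ) + 2 * lam + 1) ≠ 0 from by positivity),
      Real.Gamma_add_one hb.ne', Real.Gamma_add_one hlam.ne',
      Real.Gamma_add_one (by positivity : (2:ℝ) * lam ≠ 0)]
    have e1 : (n : ℕ) - (j + 1) = n - j - 1 := by omega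
    have e2 : (n + 1 : ℕ) - (j + 1) = n - j := by omega
    rw [e1, e2]
    have hcnj : ((n - j : ℕ) : ℝ) = (n : ℝ) - (j : ℝ) := by rw [Nat.cast_sub (by omega)]
    have hc2 : ((n - j - 1 : ℕ) : ℝ) = (n : ℝ) - (j : ℝ) - 1 := by
      rw [Nat.cast_sub (by omega : 1 ≤ n - j), hcnj]; push_cast; ring
    have hF2 : ((Nat.factorial (n - j) : ℕ) : ℝ)
        = ((n : ℝ) - (j : ℝ)) * ((Nat.factorial (n - j - 1) : ℕ) : ℝ) := by
      conv_lhs => rw [show n - j = (n - j - 1) + 1 from by omega]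
      rw [Nat.factorial_succ]; push_cast [hc2]; ring
    have hJ1 : ((Nat.factorial (j + 1) : ℕ) : ℝ)
        = ((j : ℝ) + 1) * ((Nat.factorial j : ℕ) : ℝ) := by
      rw [Nat.factorial_succ]; push_cast; ring
    have s2 : (-1 : ℝ) ^ (n + (j + 1)) = -(-1 : ℝ) ^ (n + j) := by
      rw [show n + (j + 1) = n + j + 1 from by omega, pow_succ]; ring
    have s3 : (-1 : ℝ) ^ (n + 1 + (j + 1)) = (-1 : ℝ) ^ (n + j) := by
      rw [show n + 1 + (j + 1) = n + j + 1 + 1 from by omega, pow_succ, pow_succ]; ring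
    have p1 : (2 : ℝ) ^ (j + 1) = 2 ^ j * 2 := pow_succ 2 j
    rw [hF2, hJ1, s2, s3, p1]
    have hFb : ((Nat.factorial (n - j - 1) : ℕ) : ℝ) ≠ 0 :=
      Nat.cast_ne_zero.mpr (Nat.factorial_ne_zero _)
    have hJb : ((Nat.factorial j : ℕ) : ℝ) ≠ 0 := Nat.cast_ne_zero.mpr (Nat.factorial_ne_zero _)
    have hnj0 : ((n : ℝ) - (j : ℝ)) ≠ 0 := by
      have : (j : ℝ) + 1 ≤ (n : ℝ) := by exact_mod_cast hj1
      linarith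
    have hg1 : Real.Gamma (lam + (j : ℝ) + 1 + 1/2) ≠ 0 :=
      (Real.Gamma_pos_of_pos (by positivity)).ne'
    have hg2 : Real.Gamma (lam + (j : ℝ) + 1) ≠ 0 := (Real.Gamma_pos_of_pos (by positivity)).ne'
    field_simp
    ring

lemma Iplus_master {lam : ℝ} (hlam : 0 < lam) (n : ℕ) {x : ℝ} (hx : (-1 : ℝ) ≤ x) :
    Iplus lam (Gegenbauer (lam + 1/2) n) x
      = Real.sqrt Real.pi * Real.Gamma lam / Real.Gamma (lam + 1/2) / (2 * ((n : ℝ) + lam + 1/2)) *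
          (((n : ℝ) + 2 * lam) * Gegenbauer lam n x + ((n : ℝ) + 1) * Gegenbauer lam (n + 1) x) := by
  have hfun : Gegenbauer (lam + 1/2) n = Gt (lam + 1/2) n :=
    funext (Gegenbauer_eq_Gt (by linarith) n)
  rw [hfun, Iplus_Gt hlam n hx, Gegenbauer_eq_Gt hlam, Gegenbauer_eq_Gt hlam, Gt, Gt]
  have hext : ∑ k ∈ Finset.range (n + 1), Acoef lam n k * (1 + x) ^ k
      = ∑ k ∈ Finset.range (n + 1 + 1), Acoef lam n k * (1 + x) ^ k := by
    refine Finset.sum_subset (Finset.range_subset_range.mpr (Nat.le_succ _)) fun k hk hnk => ?_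
    simp only [Finset.mem_range, not_lt] at hnk
    rw [Acoef, if_neg (by omega), zero_mul]
  rw [hext, Finset.mul_sum, Finset.mul_sum, ← Finset.sum_add_distrib, Finset.mul_sum]
  conv_rhs => rw [Finset.sum_range_succ']
  have hzero : Real.sqrt Real.pi * Real.Gamma lam / Real.Gamma (lam + 1/2) /
        (2 * ((n : ℝ) + lam + 1/2)) *
        (((n : ℝ) + 2 * lam) * (Acoef lam n 0 * (1 + x) ^ 0)
          + ((n : ℝ) + 1) * (Acoef lam (n + 1) 0 * (1 + x) ^ 0)) = 0 := by
    rw [pow_zero, mul_one, mul_one, coeff0 hlam n, mul_zero]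
  rw [hzero, add_zero]
  refine Finset.sum_congr rfl fun j hj => ?_
  rw [Finset.mem_range] at hj
  have hD := coeffD hlam n j (by omega)
  calc Acoef (lam + 1/2) n j * (Real.Gamma (lam + (j : ℝ) + 1) * Real.Gamma (1/2) /
          Real.Gamma (lam + (j : ℝ) + 1 + 1/2)) * (1 + x) ^ (j + 1)
      = (Real.sqrt Real.pi * Real.Gamma lam / Real.Gamma (lam + 1/2) /
          (2 * ((n : ℝ) + lam + 1/2)) *
          (((n : ℝ) + 2 * lam) * Acoef lam n (j + 1) + ((n : ℝ) + 1) * Acoef lam (n + 1) (j + 1)))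
          * (1 + x) ^ (j + 1) := by rw [hD]
    _ = _ := by ring

lemma Gegenbauer_neg (al : ℝ) (m : ℕ) (x : ℝ) :
    Gegenbauer al m (-x) = (-1 : ℝ) ^ m * Gegenbauer al m x := by
  rw [Gegenbauer, Gegenbauer, Finset.mul_sum]
  refine Finset.sum_congr rfl fun k hk => ?_
  rw [Finset.mem_range] at hk
  have h1 : (2 : ℝ) * -x = -(2 * x) := by ring
  rw [h1, neg_pow (2 * x) (m - 2 * k)]
  have h2 : (-1 : ℝ) ^ (m - 2 * k) = (-1 : ℝ) ^ m := by
    have h3 : (-1 : ℝ) ^ m = (-1 : ℝ) ^ (m - 2 * k) * ((-1 : ℝ) ^ 2) ^ k := by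
      rw [← pow_mul, ← pow_add, show m - 2 * k + 2 * k = m from by omega]
    rw [h3]
    norm_num
  rw [h2]
  ring

lemma Iminus_eq (lam : ℝ) (f : ℝ → ℝ) (x : ℝ) :
    Iminus lam f x = Iplus lam (fun t => f (-t)) (-x) := by
  rw [Iminus, Iplus]
  have h1 : (1 : ℝ) + -x = 1 - x := by ring
  rw [h1]
  congr 1
  have h2 : ∀ t : ℝ, (t - x) ^ (-(1/2) : ℝ) * (1 - t) ^ lam * f t
      = (-x - -t) ^ (-(1/2) : ℝ) * (1 + -t) ^ lam * f (- -t) := by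
    intro t
    rw [neg_neg, show -x - -t = t - x from by ring, show (1 : ℝ) + -t = 1 - t from by ring]
  calc ∫ τ in x..(1:ℝ), (τ - x) ^ (-(1/2) : ℝ) * (1 - τ) ^ lam * f τ
      = ∫ τ in x..(1:ℝ), (-x - -τ) ^ (-(1/2) : ℝ) * (1 + -τ) ^ lam * f (- -τ) := by
        exact intervalIntegral.integral_congr fun τ _ => h2 τ
    _ = ∫ τ in (-1 : ℝ)..(-x), (-x - τ) ^ (-(1/2) : ℝ) * (1 + τ) ^ lam * f (-τ) := by
        exact intervalIntegral.integral_comp_neg fun τ => (-x - τ) ^ (-(1/2) : ℝ) *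
          (1 + τ) ^ lam * f (-τ)

lemma Iplus_const_mul (lam c : ℝ) (f : ℝ → ℝ) (x : ℝ) :
    Iplus lam (fun t => c * f t) x = c * Iplus lam f x := by
  rw [Iplus, Iplus]
  have h : ∀ τ : ℝ, (x - τ) ^ (-(1/2) : ℝ) * (1 + τ) ^ lam * (c * f τ)
      = c * ((x - τ) ^ (-(1/2) : ℝ) * (1 + τ) ^ lam * f τ) := fun τ => by ring
  simp only [h]
  rw [intervalIntegral.integral_const_mul]
  ring

end AuxProof

/-- `𝓘^λ_+ C_n^{λ+1/2} = const · C_n^λ` and `𝓘^λ_− C_n^{λ+1/2} = const · C_{n+1}^λ`. -/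
theorem stmt17 (lam : ℝ) (hlam : 0 < lam) (n : ℕ) (x : ℝ) (hx : x ∈ Set.Icc (-1 : ℝ) 1) :
    calIplus lam (Gegenbauer (lam + 1 / 2) n) x =
      (Real.sqrt Real.pi * Real.Gamma lam / Real.Gamma (lam + 1 / 2)) *
        (((n : ℝ) + 2 * lam) / ((n : ℝ) + lam + 1 / 2)) * Gegenbauer lam n x ∧
    calIminus lam (Gegenbauer (lam + 1 / 2) n) x =
      (Real.sqrt Real.pi * Real.Gamma lam / Real.Gamma (lam + 1 / 2)) *
        (((n : ℝ) + 1) / ((n : ℝ) + lam + 1 / 2)) * Gegenbauer lam (n + 1) x := by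
  obtain ⟨hx1, hx2⟩ := hx
  have hnegx : (-1 : ℝ) ≤ -x := by linarith
  have hM1 := Iplus_master hlam n hx1
  have hM2 := Iplus_master hlam n hnegx
  have hIm : Iminus lam (Gegenbauer (lam + 1 / 2) n) x
      = (-1 : ℝ) ^ n * Iplus lam (Gegenbauer (lam + 1 / 2) n) (-x) := by
    rw [Iminus_eq]
    have hf : (fun t => Gegenbauer (lam + 1 / 2) n (-t))
        = fun t => (-1 : ℝ) ^ n * Gegenbauer (lam + 1 / 2) n t :=
      funext fun t => Gegenbauer_neg _ n t
    rw [hf, Iplus_const_mul]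
  have hp1 : Gegenbauer lam n (-x) = (-1 : ℝ) ^ n * Gegenbauer lam n x := Gegenbauer_neg _ n x
  have hp2 : Gegenbauer lam (n + 1) (-x) = (-1 : ℝ) ^ (n + 1) * Gegenbauer lam (n + 1) x :=
    Gegenbauer_neg _ (n + 1) x
  have hnn : (-1 : ℝ) ^ n * (-1 : ℝ) ^ n = 1 := by
    rw [← pow_add]; exact Even.neg_one_pow ⟨n, rfl⟩
  have hs' : ((n : ℝ) + lam + 1 / 2) ≠ 0 := by positivity
  constructor
  · rw [calIplus, hM1, hIm, hM2, hp1, hp2, pow_succ]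
    trans (Real.sqrt Real.pi * Real.Gamma lam / Real.Gamma (lam + 1 / 2) /
        (2 * ((n : ℝ) + lam + 1 / 2)) *
        (((n : ℝ) + 2 * lam) * Gegenbauer lam n x + ((n : ℝ) + 1) * Gegenbauer lam (n + 1) x)
      + ((-1 : ℝ) ^ n * (-1 : ℝ) ^ n) *
        (Real.sqrt Real.pi * Real.Gamma lam / Real.Gamma (lam + 1 / 2) /
          (2 * ((n : ℝ) + lam + 1 / 2)) *
          (((n : ℝ) + 2 * lam) * Gegenbauer lam n x - ((n : ℝ) + 1) * Gegenbauer lam (n + 1) x)))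
    · ring
    · rw [hnn]
      field_simp
      ring
  · rw [calIminus, hM1, hIm, hM2, hp1, hp2, pow_succ]
    trans (Real.sqrt Real.pi * Real.Gamma lam / Real.Gamma (lam + 1 / 2) /
        (2 * ((n : ℝ) + lam + 1 / 2)) *
        (((n : ℝ) + 2 * lam) * Gegenbauer lam n x + ((n : ℝ) + 1) * Gegenbauer lam (n + 1) x)
      - ((-1 : ℝ) ^ n * (-1 : ℝ) ^ n) *
        (Real.sqrt Real.pi * Real.Gamma lam / Real.Gamma (lam + 1 / 2) /
          (2 * ((n : ℝ) + lam + 1 / 2)) *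
          (((n : ℝ) + 2 * lam) * Gegenbauer lam n x - ((n : ℝ) + 1) * Gegenbauer lam (n + 1) x)))
    · ring
    · rw [hnn]
      field_simp
      ring
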